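/- Upper bound on the bond dimension of GHZ_3(k) from Strassen's degeneration plus interpolation: assuming (a) MaMu_3(n) ⊵ GHZ_3(⌈3n²/4⌉) with error degree at most γn² for a constant γ > 0, (b) a degeneration with error degree e can be converted to the restriction GHZ_3(e+1) ⊗ MaMu_3(n) ≥ (target), and (c) bond(GHZ_3(N)) ≤ 2N for all N, it follows that for every integer α ≥ 1: bond(GHZ_3(⌈3n²/4⌉^α)) ≤ 2αγ n^{α+2}, and hence bond(GHZ_3(k)) ≤ 2γα (4/3)^{1+α/2} k^{1/2 + 1/α} for k of the form (⌈3n²/4⌉)^α. -/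

import Mathlib

open Polynomial

/-- `GHZ₃(N)` admits an MPS representation with bond dimension `D`. -/
def ReprGHZ (D N : ℕ) : Prop :=
  ∃ A B C : Fin N → Matrix (Fin D) (Fin D) ℂ,
    ∀ i j k : Fin N, (A i * B j * C k).trace = if i = j ∧ j = k then 1 else 0

/-- The (periodic) MPS bond dimension of `GHZ₃(N)`. -/
noncomputable def bondGHZ (N : ℕ) : ℕ := sInf {D | ReprGHZ D N}

/-- `MaMu₃(n) ⊵ GHZ₃(N)` with error degree at most `e`:  `ε`-polynomial `n×n` MPS
matrices whose traces give `ε^{d₀} δ_{ijk}` plus at most `e` higher-order error terms. -/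
def DegMaMuGHZ (n N e : ℕ) : Prop :=
  ∃ (A B C : Fin N → Matrix (Fin n) (Fin n) (Polynomial ℂ)) (d₀ : ℕ)
    (rem : Fin e → (Fin N → Fin N → Fin N → ℂ)),
    ∀ i j k : Fin N,
      (A i * B j * C k).trace
        = X ^ d₀ * Polynomial.C (if i = j ∧ j = k then (1 : ℂ) else 0)
          + ∑ l : Fin e, X ^ (d₀ + (l : ℕ) + 1) * Polynomial.C (rem l i j k)

/-- `GHZ₃(q) ⊗ MaMu₃(n) ≥ GHZ₃(N)` (restriction by local maps at the three parties). -/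
def RestrGHZMaMu (q n N : ℕ) : Prop :=
  ∃ A B C : Fin N → (Fin q × Fin n × Fin n → ℂ),
    ∀ i j k : Fin N,
      (∑ r : Fin q, ∑ a : Fin n, ∑ b : Fin n, ∑ c : Fin n,
          A i (r, a, b) * B j (r, b, c) * C k (r, c, a))
        = if i = j ∧ j = k then 1 else 0

open Matrix Kronecker

lemma trace_submatrix_equiv' {m k R : Type*} [Fintype m] [Fintype k] [AddCommMonoid R]
    (M : Matrix m m R) (e : k ≃ m) : (M.submatrix e e).trace = M.trace := by
  simp only [Matrix.trace, Matrix.diag, Matrix.submatrix_apply]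
  exact Fintype.sum_equiv e _ _ (fun _ => rfl)

lemma coeff_Xpow_mul_C (c : ℂ) (a m : ℕ) : (X ^ a * C c).coeff m = if m = a then c else 0 := by
  rw [mul_comm, coeff_C_mul_X_pow]

lemma coeff_mul_base {P Q : Polynomial ℂ} {d₁ d₂ : ℕ}
    (hP : ∀ a < d₁, P.coeff a = 0) (hQ : ∀ b < d₂, Q.coeff b = 0) :
    (P * Q).coeff (d₁ + d₂) = P.coeff d₁ * Q.coeff d₂ := by
  rw [Polynomial.coeff_mul]
  apply Finset.sum_eq_single (d₁, d₂)
  · intro p hp hne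
    rw [Finset.HasAntidiagonal.mem_antidiagonal] at hp
    rcases lt_or_ge p.1 d₁ with h | h
    · rw [hP _ h, zero_mul]
    · have h2 : p.2 < d₂ := by
        rcases lt_or_eq_of_le h with h' | h'
        · omega
        · exfalso; apply hne; ext <;> omega
      rw [hQ _ h2, mul_zero]
  · intro h; simp at h

/-- Coefficient-based characterization of `DegMaMuGHZ`. -/
def DegGood (n N e : ℕ) : Prop :=
  ∃ (A B C : Fin N → Matrix (Fin n) (Fin n) (Polynomial ℂ)) (d₀ : ℕ),
    ∀ i j k : Fin N,
      ((A i * B j * C k).trace).coeff d₀ = (if i = j ∧ j = k then (1 : ℂ) else 0) ∧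
      ∀ m : ℕ, ((A i * B j * C k).trace).coeff m ≠ 0 → d₀ ≤ m ∧ m ≤ d₀ + e

lemma deg_to_good {n N e : ℕ} (h : DegMaMuGHZ n N e) : DegGood n N e := by
  obtain ⟨A, B, C, d₀, rem, h⟩ := h
  refine ⟨A, B, C, d₀, fun i j k => ?_⟩
  rw [h i j k]
  constructor
  · rw [coeff_add, coeff_Xpow_mul_C, if_pos rfl, Polynomial.finset_sum_coeff]
    rw [Finset.sum_eq_zero, add_zero]
    intro l _
    rw [coeff_Xpow_mul_C, if_neg (by omega)]
  · intro m hm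
    by_contra hc
    apply hm
    rw [coeff_add, coeff_Xpow_mul_C, if_neg (by omega), Polynomial.finset_sum_coeff]
    rw [Finset.sum_eq_zero, add_zero]
    intro l _
    rw [coeff_Xpow_mul_C, if_neg (by omega)]

lemma good_to_deg {n N e : ℕ} (h : DegGood n N e) : DegMaMuGHZ n N e := by
  obtain ⟨A, B, C, d₀, h⟩ := h
  refine ⟨A, B, C, d₀, fun l i j k => ((A i * B j * C k).trace).coeff (d₀ + (l : ℕ) + 1),
    fun i j k => ?_⟩
  ext m
  rw [coeff_add, coeff_Xpow_mul_C, Polynomial.finset_sum_coeff]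
  simp only [coeff_Xpow_mul_C]
  by_cases hm : d₀ ≤ m ∧ m ≤ d₀ + e
  · rcases eq_or_lt_of_le hm.1 with heq | hlt
    · rw [if_pos heq.symm, Finset.sum_eq_zero (fun l _ => if_neg (by omega)), add_zero,
        ← heq, (h i j k).1]
    · rw [if_neg (by omega), zero_add]
      have hme : m - d₀ - 1 < e := by omega
      rw [Finset.sum_eq_single (⟨m - d₀ - 1, hme⟩ : Fin e)]
      · rw [if_pos (by simp; omega)]
        congr 1
        simp; omega
      · intro b _ hb
        refine if_neg (fun hc => hb ?_)
        apply Fin.ext; simp; omega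
      · intro hmem; exact absurd (Finset.mem_univ _) hmem
  · rw [if_neg (by omega), Finset.sum_eq_zero (fun l _ => if_neg (by omega)), add_zero]
    by_contra hc
    exact hm ((h i j k).2 m (fun h0 => hc (h0.symm ▸ rfl)))

lemma DegGood.mul {n₁ N₁ e₁ n₂ N₂ e₂ : ℕ} (h₁ : DegGood n₁ N₁ e₁) (h₂ : DegGood n₂ N₂ e₂) :
    DegGood (n₁ * n₂) (N₁ * N₂) (e₁ + e₂) := by
  obtain ⟨A₁, B₁, C₁, d₁, h₁⟩ := h₁
  obtain ⟨A₂, B₂, C₂, d₂, h₂⟩ := h₂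
  let εN : Fin N₁ × Fin N₂ ≃ Fin (N₁ * N₂) := finProdFinEquiv
  let εn : Fin n₁ × Fin n₂ ≃ Fin (n₁ * n₂) := finProdFinEquiv
  refine ⟨fun i => ((A₁ (εN.symm i).1) ⊗ₖ (A₂ (εN.symm i).2)).submatrix εn.symm εn.symm,
    fun j => ((B₁ (εN.symm j).1) ⊗ₖ (B₂ (εN.symm j).2)).submatrix εn.symm εn.symm,
    fun k => ((C₁ (εN.symm k).1) ⊗ₖ (C₂ (εN.symm k).2)).submatrix εn.symm εn.symm,
    d₁ + d₂, fun i j k => ?_⟩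
  have htr : ((((A₁ (εN.symm i).1) ⊗ₖ (A₂ (εN.symm i).2)).submatrix εn.symm εn.symm *
        ((B₁ (εN.symm j).1) ⊗ₖ (B₂ (εN.symm j).2)).submatrix εn.symm εn.symm) *
        ((C₁ (εN.symm k).1) ⊗ₖ (C₂ (εN.symm k).2)).submatrix εn.symm εn.symm).trace
      = (A₁ (εN.symm i).1 * B₁ (εN.symm j).1 * C₁ (εN.symm k).1).trace *
        (A₂ (εN.symm i).2 * B₂ (εN.symm j).2 * C₂ (εN.symm k).2).trace := by
    rw [Matrix.submatrix_mul_equiv, Matrix.submatrix_mul_equiv, trace_submatrix_equiv',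
      ← Matrix.mul_kronecker_mul, ← Matrix.mul_kronecker_mul, Matrix.trace_kronecker]
  rw [htr]
  obtain ⟨hc₁, hs₁⟩ := h₁ (εN.symm i).1 (εN.symm j).1 (εN.symm k).1
  obtain ⟨hc₂, hs₂⟩ := h₂ (εN.symm i).2 (εN.symm j).2 (εN.symm k).2
  constructor
  · rw [coeff_mul_base (fun a ha => by by_contra hc; exact absurd (hs₁ a hc).1 (by omega))
      (fun b hb => by by_contra hc; exact absurd (hs₂ b hc).1 (by omega)), hc₁, hc₂]
    have key : (i = j ∧ j = k) ↔
        (((εN.symm i).1 = (εN.symm j).1 ∧ (εN.symm j).1 = (εN.symm k).1) ∧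
         ((εN.symm i).2 = (εN.symm j).2 ∧ (εN.symm j).2 = (εN.symm k).2)) := by
      constructor
      · rintro ⟨rfl, rfl⟩; tauto
      · rintro ⟨⟨a1, a2⟩, ⟨b1, b2⟩⟩
        refine ⟨εN.symm.injective (Prod.ext a1 b1), εN.symm.injective (Prod.ext a2 b2)⟩
    rcases Classical.em (i = j ∧ j = k) with hc | hc
    · rw [if_pos hc, if_pos (key.mp hc).1, if_pos (key.mp hc).2, mul_one]
    · rw [if_neg hc]
      rcases not_and_or.mp (fun h => hc (key.mpr h)) with h | h
      · rw [if_neg h, zero_mul]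
      · rw [if_neg h, mul_zero]
  · intro m hm
    rw [Polynomial.coeff_mul] at hm
    obtain ⟨p, hp, hne⟩ := Finset.exists_ne_zero_of_sum_ne_zero hm
    rw [Finset.HasAntidiagonal.mem_antidiagonal] at hp
    have hP : (A₁ (εN.symm i).1 * B₁ (εN.symm j).1 * C₁ (εN.symm k).1).trace.coeff p.1 ≠ 0 :=
      fun h0 => hne (by rw [h0, zero_mul])
    have hQ : (A₂ (εN.symm i).2 * B₂ (εN.symm j).2 * C₂ (εN.symm k).2).trace.coeff p.2 ≠ 0 :=
      fun h0 => hne (by rw [h0, mul_zero])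
    have b1 := hs₁ p.1 hP
    have b2 := hs₂ p.2 hQ
    omega

lemma DegGood.one : DegGood 1 1 0 := by
  refine ⟨fun _ => 1, fun _ => 1, fun _ => 1, 0, fun i j k => ?_⟩
  have hij : i = j ∧ j = k := ⟨Subsingleton.elim _ _, Subsingleton.elim _ _⟩
  rw [mul_one, mul_one]
  constructor
  · simp [hij, Matrix.trace]
  · intro m hm
    simp only [Matrix.trace_one] at hm
    constructor
    · omega
    · by_contra hc
      exact hm (by rw [Polynomial.coeff_natCast_ite]; simp; omega)

lemma DegGood.pow {n N e : ℕ} (h : DegGood n N e) : ∀ α : ℕ, DegGood (n ^ α) (N ^ α) (α * e)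
  | 0 => by simpa using DegGood.one
  | (α + 1) => by
      have := (DegGood.pow h α).mul h
      rw [pow_succ, pow_succ, Nat.succ_mul]
      exact this

lemma restr_repr {q n N : ℕ} (h : RestrGHZMaMu q n N) : ReprGHZ (q * n) N := by
  obtain ⟨A, B, C, h⟩ := h
  let ε : Fin q × Fin n ≃ Fin (q * n) := finProdFinEquiv
  refine ⟨fun i => (Matrix.of fun p p' : Fin q × Fin n =>
      if p.1 = p'.1 then A i (p.1, p.2, p'.2) else 0).submatrix ε.symm ε.symm,
    fun j => (Matrix.of fun p p' : Fin q × Fin n =>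
      if p.1 = p'.1 then B j (p.1, p.2, p'.2) else 0).submatrix ε.symm ε.symm,
    fun k => (Matrix.of fun p p' : Fin q × Fin n =>
      if p.1 = p'.1 then C k (p.1, p.2, p'.2) else 0).submatrix ε.symm ε.symm,
    fun i j k => ?_⟩
  rw [Matrix.submatrix_mul_equiv, Matrix.submatrix_mul_equiv, trace_submatrix_equiv',
    ← h i j k]
  simp only [Matrix.trace, Matrix.diag, Matrix.mul_apply, Matrix.of_apply,
    Fintype.sum_prod_type, ite_mul, zero_mul, mul_ite, mul_zero]
  simp [Finset.sum_ite_eq, Finset.sum_ite_eq', Finset.mul_sum, Finset.sum_mul]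
  refine Finset.sum_congr rfl fun r _ => Finset.sum_congr rfl fun a _ => ?_
  exact Finset.sum_comm

lemma bond_zero : bondGHZ 0 = 0 :=
  Nat.le_zero.mp (Nat.sInf_le ⟨finZeroElim, finZeroElim, finZeroElim, fun i => i.elim0⟩)

/-- upper bound on `bond(GHZ₃(k))` from Strassen's degeneration plus
interpolation.  Assume (a) `MaMu₃(n) ⊵ GHZ₃(⌈3n²/4⌉)` with error degree at most `γn²`
for a constant `γ > 0`; (b) any degeneration `MaMu₃(n) ⊵ GHZ₃(N)` with error degree `e`
converts to the restriction `GHZ₃(e+1) ⊗ MaMu₃(n) ≥ GHZ₃(N)`; and (c)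
`bond(GHZ₃(N)) ≤ 2N` for all `N`.  Then for every integer `α ≥ 1` and every `n`:
`bond(GHZ₃(⌈3n²/4⌉^α)) ≤ 2αγ n^{α+2}`, and hence, with `k = ⌈3n²/4⌉^α`,
`bond(GHZ₃(k)) ≤ 2γα (4/3)^{1+α/2} k^{1/2 + 1/α}`. -/
theorem stmt17 (γ : ℕ) (hγ : 0 < γ)
    (ha : ∀ n : ℕ, DegMaMuGHZ n ((3 * n ^ 2 + 3) / 4) (γ * n ^ 2))
    (hb : ∀ n N e : ℕ, DegMaMuGHZ n N e → RestrGHZMaMu (e + 1) n N)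
    (hc : ∀ N : ℕ, bondGHZ N ≤ 2 * N) :
    ∀ α : ℕ, 1 ≤ α → ∀ n : ℕ,
      bondGHZ (((3 * n ^ 2 + 3) / 4) ^ α) ≤ 2 * α * γ * n ^ (α + 2) ∧
      (bondGHZ (((3 * n ^ 2 + 3) / 4) ^ α) : ℝ)
        ≤ 2 * γ * α * (4 / 3 : ℝ) ^ ((1 : ℝ) + (α : ℝ) / 2)
            * (((((3 * n ^ 2 + 3) / 4) ^ α : ℕ) : ℝ)) ^ ((1 : ℝ) / 2 + 1 / (α : ℝ)) := by
  intro α hα n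
  set M : ℕ := (3 * n ^ 2 + 3) / 4 with hM
  have key : bondGHZ (M ^ α) ≤ 2 * α * γ * n ^ (α + 2) := by
    rcases Nat.eq_zero_or_pos n with hn | hn
    · have hM0 : M = 0 := by rw [hM, hn]; norm_num
      rw [hM0, zero_pow (by omega : α ≠ 0), bond_zero]
      exact Nat.zero_le _
    · have hd : DegGood (n ^ α) (M ^ α) (α * (γ * n ^ 2)) := (deg_to_good (ha n)).pow α
      have hr := restr_repr (hb _ _ _ (good_to_deg hd))
      have h1 : bondGHZ (M ^ α) ≤ (α * (γ * n ^ 2) + 1) * n ^ α := Nat.sInf_le hr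
      have h2 : 1 ≤ α * (γ * n ^ 2) := Nat.one_le_iff_ne_zero.mpr (by positivity)
      calc bondGHZ (M ^ α) ≤ (α * (γ * n ^ 2) + 1) * n ^ α := h1
        _ ≤ (2 * (α * (γ * n ^ 2))) * n ^ α := Nat.mul_le_mul_right _ (by omega)
        _ = 2 * α * γ * n ^ (α + 2) := by rw [pow_add]; ring
  refine ⟨key, ?_⟩
  have hcast : (bondGHZ (M ^ α) : ℝ) ≤ 2 * α * γ * (n : ℝ) ^ (α + 2) := by exact_mod_cast key
  set t : ℝ := (1 : ℝ) + (α : ℝ) / 2 with ht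
  have ht0 : (0 : ℝ) ≤ t := by positivity
  have hα0 : (α : ℝ) ≠ 0 := by positivity
  have hMr : (0 : ℝ) ≤ (M : ℝ) := Nat.cast_nonneg _
  have hx : (0 : ℝ) ≤ (n : ℝ) := Nat.cast_nonneg _
  have h3 : 3 * (n : ℝ) ^ 2 ≤ 4 * (M : ℝ) := by
    have : 3 * n ^ 2 ≤ 4 * M := by rw [hM]; omega
    exact_mod_cast this
  have hx2 : (n : ℝ) ^ 2 ≤ (4 / 3) * (M : ℝ) := by linarith
  have hA : (((M ^ α : ℕ) : ℝ)) ^ ((1 : ℝ) / 2 + 1 / (α : ℝ)) = (M : ℝ) ^ t := by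
    push_cast
    rw [← Real.rpow_natCast (M : ℝ) α, ← Real.rpow_mul hMr]
    congr 1
    field_simp
    ring
  have hB : ((n : ℝ) ^ 2) ^ t = (n : ℝ) ^ (α + 2) := by
    rw [← Real.rpow_natCast (n : ℝ) 2, ← Real.rpow_mul hx, ← Real.rpow_natCast (n : ℝ) (α + 2)]
    congr 1
    push_cast
    ring
  have hC : ((n : ℝ) ^ 2) ^ t ≤ ((4 / 3) * (M : ℝ)) ^ t :=
    Real.rpow_le_rpow (by positivity) hx2 ht0
  have hD : ((4 / 3 : ℝ) * (M : ℝ)) ^ t = (4 / 3 : ℝ) ^ t * (M : ℝ) ^ t :=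
    Real.mul_rpow (by norm_num) hMr
  have hfin : (n : ℝ) ^ (α + 2) ≤ (4 / 3 : ℝ) ^ t * (M : ℝ) ^ t := by
    rw [← hB]; rw [hD] at hC; exact hC
  calc (bondGHZ (M ^ α) : ℝ) ≤ 2 * α * γ * (n : ℝ) ^ (α + 2) := hcast
    _ ≤ 2 * α * γ * ((4 / 3 : ℝ) ^ t * (M : ℝ) ^ t) := by
        apply mul_le_mul_of_nonneg_left hfin (by positivity)
    _ = 2 * γ * α * (4 / 3 : ℝ) ^ t * (((M ^ α : ℕ) : ℝ)) ^ ((1 : ℝ) / 2 + 1 / (α : ℝ)) := by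
        rw [hA]; ring
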